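/- Suppose w is a positive word in the free group F₂ on a, b. Then R(w,r,s) is monotone nondecreasing in each of r and s: if r ≤ r' and s ≤ s' then R(w,r,s) ≤ R(w,r',s'). -/

import Mathlib

/-- The translation number of a lift of an orientation-preserving circle homeomorphism. -/
noncomputable def rotZ (f : CircleDeg1Liftˣ) : ℝ :=
  (f : CircleDeg1Lift).translationNumber

/-- The generator `a` of the free group `F₂`. -/
def genA : FreeGroup Bool := FreeGroup.of true

/-- The generator `b` of the free group `F₂`. -/
def genB : FreeGroup Bool := FreeGroup.of false

/-- A word in `F₂` is positive if it lies in the submonoid generated by `a` and `b`. -/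
def IsPositiveWord (w : FreeGroup Bool) : Prop :=
  w ∈ Submonoid.closure ({genA, genB} : Set (FreeGroup Bool))

/-- `R(w,r,s)`: the supremum of `rot~(ρ w)` over all representations
`ρ : F₂ → Homeo⁺(S¹)~` with `rot~(ρ a) = r` and `rot~(ρ b) = s`. -/
noncomputable def RR (w : FreeGroup Bool) (r s : ℝ) : ℝ :=
  sSup { t : ℝ | ∃ ρ : FreeGroup Bool →* CircleDeg1Liftˣ,
    rotZ (ρ genA) = r ∧ rotZ (ρ genB) = s ∧ rotZ (ρ w) = t }

open CircleDeg1Lift Filter Topology Set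

/-- translation as a unit -/
noncomputable def trU (c : ℝ) : CircleDeg1Liftˣ := translate (Multiplicative.ofAdd c)

lemma trU_mul_apply (c : ℝ) (f : CircleDeg1Liftˣ) (x : ℝ) :
    ((trU c * f : CircleDeg1Liftˣ) : CircleDeg1Lift) x = c + (f : CircleDeg1Lift) x := by
  simp [trU, Units.val_mul, mul_apply]

lemma unit_continuous (f : CircleDeg1Liftˣ) : Continuous (f : CircleDeg1Lift) :=
  (f : CircleDeg1Lift).continuous_iff_surjective.mpr (toOrderIso f).surjective

lemma continuous_rot_trans (f : CircleDeg1Liftˣ) :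
    Continuous fun c : ℝ => rotZ (trU c * f) := by
  have hf := unit_continuous f
  have hiter : ∀ n : ℕ, Continuous fun c : ℝ =>
      (((trU c * f : CircleDeg1Liftˣ) : CircleDeg1Lift) ^ n) 0 := by
    intro n
    induction n with
    | zero => simpa using continuous_const
    | succ n ih =>
      have : ∀ c : ℝ, (((trU c * f : CircleDeg1Liftˣ) : CircleDeg1Lift) ^ (n+1)) 0
          = c + (f : CircleDeg1Lift) ((((trU c * f : CircleDeg1Liftˣ) : CircleDeg1Lift) ^ n) 0) := by
        intro c
        rw [pow_succ', mul_apply, trU_mul_apply]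
      simp only [this]
      exact continuous_id.add (hf.comp ih)
  have key : TendstoUniformly
      (fun (n : ℕ) (c : ℝ) => (((trU c * f : CircleDeg1Liftˣ) : CircleDeg1Lift) ^ n) 0 / n)
      (fun c => rotZ (trU c * f)) atTop := by
    rw [Metric.tendstoUniformly_iff]
    intro ε hε
    have h1 : Tendsto (fun n : ℕ => 1 / (n : ℝ)) atTop (𝓝 0) :=
      tendsto_one_div_atTop_nhds_zero_nat
    filter_upwards [h1.eventually (gt_mem_nhds hε), eventually_gt_atTop 0] with n hn hn0 c
    have hb := ((trU c * f : CircleDeg1Liftˣ) : CircleDeg1Lift).dist_pow_map_zero_mul_translationNumber_le n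
    have hnpos : (0:ℝ) < n := by exact_mod_cast hn0
    rw [dist_comm]
    calc dist ((((trU c * f : CircleDeg1Liftˣ) : CircleDeg1Lift) ^ n) 0 / n) (rotZ (trU c * f))
        = dist ((((trU c * f : CircleDeg1Liftˣ) : CircleDeg1Lift) ^ n) 0)
            (n * rotZ (trU c * f)) / n := by
          rw [Real.dist_eq, Real.dist_eq, ← abs_of_pos hnpos, ← abs_div]
          congr 1
          field_simp
          rw [abs_of_pos hnpos]
          ring
      _ ≤ 1 / n := by
          have : dist ((((trU c * f : CircleDeg1Liftˣ) : CircleDeg1Lift) ^ n) 0)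
              (n * rotZ (trU c * f)) ≤ 1 := hb
          gcongr
      _ < ε := hn
  exact key.continuous (Eventually.of_forall fun n => (hiter n).div_const n).frequently

lemma rotZ_trU (c : ℝ) : rotZ (trU c) = c := translationNumber_translate c

lemma rotZ_trU_nat (n : ℕ) (f : CircleDeg1Liftˣ) :
    rotZ (trU (n : ℝ) * f) = n + rotZ f := by
  have hc : Commute ((trU (n : ℝ) : CircleDeg1Liftˣ) : CircleDeg1Lift) (f : CircleDeg1Lift) := by
    apply CircleDeg1Lift.ext
    intro x
    have h1 : ((trU (n : ℝ) : CircleDeg1Liftˣ) : CircleDeg1Lift)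
        ((f : CircleDeg1Lift) x) = (n : ℝ) + (f : CircleDeg1Lift) x := by
      simp [trU]
    have h2 : (f : CircleDeg1Lift) (((trU (n : ℝ) : CircleDeg1Liftˣ) : CircleDeg1Lift) x)
        = (n : ℝ) + (f : CircleDeg1Lift) x := by
      simp [trU, map_nat_add]
    simp only [mul_apply]
    rw [h1, h2]
  have := translationNumber_mul_of_commute hc
  simpa [rotZ, Units.val_mul, translationNumber_translate, trU] using this

/-- exact attainment of any larger translation number by a left translate -/
lemma exists_translate_rot (f : CircleDeg1Liftˣ) {r' : ℝ} (h : rotZ f ≤ r') :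
    ∃ c : ℝ, 0 ≤ c ∧ rotZ (trU c * f) = r' := by
  set n : ℕ := ⌈r' - rotZ f⌉₊ with hn
  have h2 : r' ≤ rotZ f + n := by
    have := Nat.le_ceil (r' - rotZ f)
    linarith
  have hcont := (continuous_rot_trans f).continuousOn (s := Set.Icc 0 (n : ℝ))
  have h0 : rotZ (trU 0 * f) = rotZ f := by
    have : trU (0 : ℝ) = 1 := by simp [trU]
    rw [this, one_mul]
  have hn' : rotZ (trU (n : ℝ) * f) = n + rotZ f := rotZ_trU_nat n f
  have := intermediate_value_Icc (by positivity : (0:ℝ) ≤ (n:ℝ)) hcont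
  rw [h0, hn'] at this
  have hr' : r' ∈ Set.Icc (rotZ f) ((n : ℝ) + rotZ f) := ⟨h, by linarith⟩
  obtain ⟨c, hc, hceq⟩ := this hr'
  exact ⟨c, hc.1, hceq⟩

/-- positive words are pointwise monotone in the generators -/
lemma hom_le_of_gen_le {ρ ρ' : FreeGroup Bool →* CircleDeg1Liftˣ}
    (ha : ((ρ genA : CircleDeg1Liftˣ) : CircleDeg1Lift) ≤ ((ρ' genA : CircleDeg1Liftˣ) : CircleDeg1Lift))
    (hb : ((ρ genB : CircleDeg1Liftˣ) : CircleDeg1Lift) ≤ ((ρ' genB : CircleDeg1Liftˣ) : CircleDeg1Lift))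
    {w : FreeGroup Bool} (hw : IsPositiveWord w) :
    ((ρ w : CircleDeg1Liftˣ) : CircleDeg1Lift) ≤ ((ρ' w : CircleDeg1Liftˣ) : CircleDeg1Lift) := by
  induction hw using Submonoid.closure_induction with
  | mem x hx =>
    rcases hx with hx | hx
    · subst hx; exact ha
    · simp only [Set.mem_singleton_iff] at hx; subst hx; exact hb
  | one => simp
  | mul x y hx hy ihx ihy =>
    intro t
    simp only [map_mul, Units.val_mul, mul_apply]
    calc ((ρ x : CircleDeg1Liftˣ) : CircleDeg1Lift) (((ρ y : CircleDeg1Liftˣ) : CircleDeg1Lift) t)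
        ≤ ((ρ x : CircleDeg1Liftˣ) : CircleDeg1Lift) (((ρ' y : CircleDeg1Liftˣ) : CircleDeg1Lift) t) :=
          ((ρ x : CircleDeg1Liftˣ) : CircleDeg1Lift).mono (ihy t)
      _ ≤ ((ρ' x : CircleDeg1Liftˣ) : CircleDeg1Lift) (((ρ' y : CircleDeg1Liftˣ) : CircleDeg1Lift) t) :=
          ihx _

lemma tau_mul_le (f g : CircleDeg1Lift) :
    (f * g).translationNumber ≤ f.translationNumber + g.translationNumber + 3 := by
  have h1 := (f * g).translationNumber_le_ceil_sub 0
  have h2 : ((f * g) 0 : ℝ) = f (g 0) := rfl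
  have h3 := f.map_lt_add_translationNumber_add_one (g 0)
  have h4 := g.map_lt_add_translationNumber_add_one 0
  have h5 : (⌈(f * g) 0 - 0⌉ : ℝ) < (f * g) 0 - 0 + 1 := Int.ceil_lt_add_one _
  have := h1.trans h5.le
  rw [h2] at this
  linarith

/-- uniform upper bound for rotZ (ρ w) over representations with fixed generator rot numbers -/
lemma exists_bound (r' s' : ℝ) {w : FreeGroup Bool} (hw : IsPositiveWord w) :
    ∃ C : ℝ, ∀ ρ : FreeGroup Bool →* CircleDeg1Liftˣ,
      rotZ (ρ genA) = r' → rotZ (ρ genB) = s' → rotZ (ρ w) ≤ C := by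
  induction hw using Submonoid.closure_induction with
  | mem x hx =>
    rcases hx with hx | hx
    · subst hx; exact ⟨r', fun ρ h1 _ => h1.le⟩
    · simp only [Set.mem_singleton_iff] at hx; subst hx
      exact ⟨s', fun ρ _ h2 => h2.le⟩
  | one =>
    refine ⟨0, fun ρ _ _ => ?_⟩
    simp [rotZ, translationNumber_one]
  | mul x y hx hy ihx ihy =>
    obtain ⟨C₁, h₁⟩ := ihx
    obtain ⟨C₂, h₂⟩ := ihy
    refine ⟨C₁ + C₂ + 3, fun ρ ha hb => ?_⟩
    have key : rotZ (ρ (x * y)) ≤ rotZ (ρ x) + rotZ (ρ y) + 3 := by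
      simpa [rotZ, map_mul, Units.val_mul] using
        tau_mul_le ((ρ x : CircleDeg1Liftˣ) : CircleDeg1Lift) ((ρ y : CircleDeg1Liftˣ) : CircleDeg1Lift)
    have := add_le_add (add_le_add (h₁ ρ ha hb) (h₂ ρ ha hb)) (le_refl (3:ℝ))
    linarith [h₁ ρ ha hb, h₂ ρ ha hb]

/-- For a positive word `w`, `R(w,r,s)` is monotone nondecreasing in each of `r` and `s`. -/
theorem RR_monotone_of_positive (w : FreeGroup Bool) (hw : IsPositiveWord w)
    (r r' s s' : ℝ) (hr : r ≤ r') (hs : s ≤ s') :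
    RR w r s ≤ RR w r' s' := by
  set S := { t : ℝ | ∃ ρ : FreeGroup Bool →* CircleDeg1Liftˣ,
    rotZ (ρ genA) = r ∧ rotZ (ρ genB) = s ∧ rotZ (ρ w) = t } with hS
  set S' := { t : ℝ | ∃ ρ : FreeGroup Bool →* CircleDeg1Liftˣ,
    rotZ (ρ genA) = r' ∧ rotZ (ρ genB) = s' ∧ rotZ (ρ w) = t } with hS'
  have hSne : S.Nonempty := by
    refine ⟨rotZ ((FreeGroup.lift fun x => if x then trU r else trU s) w),
      FreeGroup.lift fun x => if x then trU r else trU s, ?_, ?_, rfl⟩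
    · simp [genA, rotZ_trU]
    · simp [genB, rotZ_trU]
  obtain ⟨C, hC⟩ := exists_bound r' s' hw
  have hbdd : BddAbove S' := by
    refine ⟨C, fun t ht => ?_⟩
    obtain ⟨ρ, h1, h2, h3⟩ := ht
    exact h3 ▸ hC ρ h1 h2
  rw [RR, RR, ← hS, ← hS']
  refine csSup_le hSne fun t ht => ?_
  obtain ⟨ρ, ha, hb, hteq⟩ := ht
  obtain ⟨ca, hca0, hca⟩ := exists_translate_rot (ρ genA) (ha ▸ hr)
  obtain ⟨cb, hcb0, hcb⟩ := exists_translate_rot (ρ genB) (hb ▸ hs)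
  set ρ' : FreeGroup Bool →* CircleDeg1Liftˣ :=
    FreeGroup.lift fun x => if x then trU ca * ρ genA else trU cb * ρ genB with hρ'
  have hρ'A : ρ' genA = trU ca * ρ genA := by simp [hρ', genA]
  have hρ'B : ρ' genB = trU cb * ρ genB := by simp [hρ', genB]
  have hle : ((ρ w : CircleDeg1Liftˣ) : CircleDeg1Lift) ≤ ((ρ' w : CircleDeg1Liftˣ) : CircleDeg1Lift) := by
    apply hom_le_of_gen_le _ _ hw
    · rw [hρ'A]
      intro x
      rw [trU_mul_apply]
      linarith [le_refl (((ρ genA : CircleDeg1Liftˣ) : CircleDeg1Lift) x)]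
    · rw [hρ'B]
      intro x
      rw [trU_mul_apply]
      linarith [le_refl (((ρ genB : CircleDeg1Liftˣ) : CircleDeg1Lift) x)]
  have htle : t ≤ rotZ (ρ' w) := by
    rw [← hteq]
    exact translationNumber_mono hle
  have hmem : rotZ (ρ' w) ∈ S' := ⟨ρ', by rw [hρ'A]; exact hca, by rw [hρ'B]; exact hcb, rfl⟩
  exact htle.trans (le_csSup hbdd hmem)
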